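/- Let (ν_r, Σ_r)_r be a sequence in (0,∞) × SPD(d) such that (ν_r)_r has a subsequence converging to 0. Then (ν_r, Σ_r)_r is not a minimizing sequence of L, i.e. (L(ν_r, Σ_r))_r does not converge to inf_{(ν,Σ) ∈ (0,∞)×SPD(d)} L(ν, Σ). -/

import Mathlib

open Real Matrix Filter Topology

/-- The negative log-likelihood `L(ν, Σ)` of the Student-t distribution (with `μ = 0`):
`L(ν,Σ) = −2 log Γ((d+ν)/2) + 2 log Γ(ν/2) − ν log ν
  + (d+ν) Σᵢ wᵢ log(ν + xᵢᵀ Σ⁻¹ xᵢ) + log det Σ`. -/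
noncomputable def negLogLik (d n : ℕ) (x : Fin n → Fin d → ℝ) (w : Fin n → ℝ)
    (ν : ℝ) (S : Matrix (Fin d) (Fin d) ℝ) : ℝ :=
  -2 * Real.log (Real.Gamma ((d + ν) / 2)) + 2 * Real.log (Real.Gamma (ν / 2))
    - ν * Real.log ν
    + (d + ν) * ∑ i, w i * Real.log (ν + x i ⬝ᵥ S⁻¹ *ᵥ x i)
    + Real.log S.det


lemma aux_diag_pos {d : ℕ} {P : Matrix (Fin d) (Fin d) ℝ} (hP : P.PosDef) (j : Fin d) :
    0 < P j j := by
  have := hP.dotProduct_mulVec_pos (x := Pi.single j 1) (by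
    intro h
    have := congrFun h j
    simp at this)
  simpa [dotProduct, mulVec, Pi.single_apply, Finset.sum_ite_eq] using this

lemma aux_trace_eq_sum_eigenvalues {d : ℕ} {M : Matrix (Fin d) (Fin d) ℝ}
    (hM : M.IsHermitian) : M.trace = ∑ i, hM.eigenvalues i := by
  conv_lhs => rw [hM.spectral_theorem]
  rw [Unitary.conjStarAlgAut_apply]
  rw [Matrix.trace_mul_cycle]
  rw [show (star (hM.eigenvectorUnitary : Matrix (Fin d) (Fin d) ℝ)) *
      (hM.eigenvectorUnitary : Matrix (Fin d) (Fin d) ℝ) = 1 from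
      (Matrix.mem_unitaryGroup_iff').mp hM.eigenvectorUnitary.2]
  simp [Matrix.trace_diagonal]

/-- Hadamard's inequality for positive definite matrices. -/
lemma aux_det_le_prod_diag {d : ℕ} {P : Matrix (Fin d) (Fin d) ℝ} (hP : P.PosDef) :
    P.det ≤ ∏ j, P j j := by
  classical
  set v : Fin d → ℝ := fun j => (Real.sqrt (P j j))⁻¹ with hv
  have hvpos : ∀ j, 0 < v j := fun j => by
    have := aux_diag_pos hP j
    positivity
  set D : Matrix (Fin d) (Fin d) ℝ := Matrix.diagonal v with hD
  set M : Matrix (Fin d) (Fin d) ℝ := D * P * D with hMdef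
  have hDH : Dᴴ = D := by
    simp [hD, Matrix.diagonal_conjTranspose]
  have hM : M.PosSemidef := by
    have := hP.posSemidef.mul_mul_conjTranspose_same D
    rwa [hDH] at this
  have hMjj : ∀ j, M j j = 1 := by
    intro j
    have hPj := aux_diag_pos hP j
    simp only [hMdef, hD, Matrix.mul_diagonal, Matrix.diagonal_mul, hv]
    have hs := Real.mul_self_sqrt hPj.le
    have hs0 := Real.sqrt_pos.mpr hPj
    field_simp
    linarith
  have htr : M.trace = (d : ℝ) := by
    simp [Matrix.trace, Matrix.diag, hMjj]
  have hdetM : M.det = (∏ j, v j)^2 * P.det := by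
    simp [hMdef, hD, Matrix.det_mul, Matrix.det_diagonal]; ring
  -- eigenvalues
  have hkey : M.det ≤ 1 := by
    rw [hM.1.det_eq_prod_eigenvalues]
    have h1 : ∀ i ∈ Finset.univ, (hM.1.eigenvalues i : ℝ) ≤ Real.exp (hM.1.eigenvalues i - 1) := by
      intro i _
      have := Real.add_one_le_exp (hM.1.eigenvalues i - 1)
      linarith
    calc (∏ i, (hM.1.eigenvalues i : ℝ)) ≤ ∏ i, Real.exp (hM.1.eigenvalues i - 1) :=
          Finset.prod_le_prod (fun i _ => hM.eigenvalues_nonneg i) h1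
      _ = Real.exp (∑ i, (hM.1.eigenvalues i - 1)) := by rw [← Real.exp_sum]
      _ = Real.exp (M.trace - d) := by
          rw [Finset.sum_sub_distrib, ← aux_trace_eq_sum_eigenvalues hM.1]; simp
      _ = 1 := by rw [htr]; simp
  rw [hdetM] at hkey
  have hprodv : (∏ j, v j)^2 = (∏ j, P j j)⁻¹ := by
    rw [← Finset.prod_pow, ← Finset.prod_inv_distrib]
    refine Finset.prod_congr rfl fun j _ => ?_
    have := aux_diag_pos hP j
    simp only [hv]
    rw [← Real.sqrt_inv, Real.sq_sqrt (by positivity)]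
  rw [hprodv] at hkey
  have hprodP : 0 < ∏ j, P j j := Finset.prod_pos fun j _ => aux_diag_pos hP j
  calc P.det = (∏ j, P j j) * ((∏ j, P j j)⁻¹ * P.det) := by field_simp
    _ ≤ (∏ j, P j j) * 1 := by nlinarith [hkey, hprodP]
    _ = ∏ j, P j j := by ring


lemma aux_exists_subset {d n : ℕ} (hd : 1 ≤ d) (hdn : d ≤ n) (w a : Fin n → ℝ)
    (hw : ∀ i, 0 ≤ w i) (hw1 : ∑ i, w i = 1) (hwd : ∀ i, w i ≤ 1 / d) :
    ∃ T : Finset (Fin n), T.card = d ∧ (1 / d : ℝ) * ∑ j ∈ T, a j ≤ ∑ i, w i * a i := by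
  classical
  set σ := Tuple.sort a with hσ
  have hmono : Monotone (a ∘ σ) := Tuple.monotone_sort a
  have hinj : Function.Injective (fun i : Fin d => σ (Fin.castLE hdn i)) :=
    fun i j h => by
      have := σ.injective h
      exact Fin.castLE_injective hdn this
  set T : Finset (Fin n) := Finset.image (fun i : Fin d => σ (Fin.castLE hdn i)) Finset.univ
    with hT
  have hcard : T.card = d := by
    rw [hT, Finset.card_image_of_injective _ hinj, Finset.card_univ, Fintype.card_fin]
  have hd1 : d - 1 < d := Nat.sub_lt hd one_pos
  set jlast : Fin d := ⟨d - 1, hd1⟩ with hjlast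
  set t : ℝ := a (σ (Fin.castLE hdn jlast)) with htdef
  have ht1 : ∀ i ∈ T, a i ≤ t := by
    intro i hi
    rw [hT, Finset.mem_image] at hi
    obtain ⟨k, -, rfl⟩ := hi
    exact hmono (by
      simp only [Fin.le_def, Fin.coe_castLE]
      show (k : ℕ) ≤ d - 1
      have := k.isLt
      omega)
  have ht2 : ∀ i ∉ T, t ≤ a i := by
    intro i hi
    have hik : i = σ (σ.symm i) := (σ.apply_symm_apply i).symm
    have hge : d ≤ (σ.symm i : ℕ) := by
      by_contra hlt
      push_neg at hlt
      apply hi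
      rw [hT, Finset.mem_image]
      refine ⟨⟨(σ.symm i : ℕ), hlt⟩, Finset.mem_univ _, ?_⟩
      conv_rhs => rw [hik]
      exact congrArg σ (Fin.ext (by simp))
    calc t ≤ (a ∘ σ) (σ.symm i) := hmono (by
            simp only [Fin.le_def, Fin.coe_castLE]
            omega)
      _ = a i := by simp
  refine ⟨T, hcard, ?_⟩
  have hdR : (0:ℝ) < (d:ℝ) := by exact_mod_cast hd
  have key1 : ∑ j ∈ T, ((1 / d : ℝ) * a j - w j * a j) ≤ ∑ j ∈ T, ((1/d : ℝ) - w j) * t := by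
    refine Finset.sum_le_sum fun j hj => ?_
    have h1 : (0:ℝ) ≤ 1/d - w j := by linarith [hwd j]
    have := mul_le_mul_of_nonneg_left (ht1 j hj) h1
    nlinarith [this]
  have hsum_split : ∑ j ∈ T, w j + ∑ j ∈ Tᶜ, w j = 1 := by
    rw [Finset.sum_add_sum_compl T w] at *
    exact hw1
  have key2 : ∑ j ∈ T, ((1/d : ℝ) - w j) * t = ∑ j ∈ Tᶜ, w j * t := by
    have : ∑ j ∈ T, ((1/d : ℝ) - w j) = ∑ j ∈ Tᶜ, w j := by
      rw [Finset.sum_sub_distrib, Finset.sum_const, hcard, nsmul_eq_mul]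
      have : (d : ℝ) * (1/d) = 1 := by field_simp
      linarith [hsum_split]
    rw [← Finset.sum_mul, this, Finset.sum_mul]
  have key3 : ∑ j ∈ Tᶜ, w j * t ≤ ∑ j ∈ Tᶜ, w j * a j := by
    refine Finset.sum_le_sum fun j hj => ?_
    exact mul_le_mul_of_nonneg_left (ht2 j (by simpa using hj)) (hw j)
  have final : (1 / d : ℝ) * ∑ j ∈ T, a j
      ≤ ∑ j ∈ T, w j * a j + ∑ j ∈ Tᶜ, w j * a j := by
    rw [Finset.mul_sum]
    have := key1.trans (key2.le.trans key3)
    rw [Finset.sum_sub_distrib] at this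
    linarith
  rw [Finset.sum_add_sum_compl T] at final
  exact final

lemma aux_lower_bound (d n : ℕ) (hd : 1 ≤ d) (hdn : d ≤ n)
    (x : Fin n → Fin d → ℝ) (w : Fin n → ℝ)
    (hw : ∀ i, 0 < w i) (hw1 : ∑ i, w i = 1)
    (hli : ∀ I : Finset (Fin n), I.card ≤ d → LinearIndependent ℝ (fun i : I => x i))
    (hwd : ∀ i, w i < 1 / d) :
    ∃ c : ℝ, ∀ ν : ℝ, 0 < ν → ∀ S : Matrix (Fin d) (Fin d) ℝ, S.PosDef →
      2 * Real.log (Real.Gamma (ν / 2)) - 2 * Real.log (Real.Gamma ((d + ν) / 2)) + c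
        ≤ negLogLik d n x w ν S := by
  classical
  -- the finite family of d-subsets and the constant c
  set 𝒯 : Finset (Finset (Fin n)) := Finset.powersetCard d Finset.univ with h𝒯
  have h𝒯ne : 𝒯.Nonempty := by
    obtain ⟨T, hT, hTc⟩ := Finset.exists_subset_card_eq (s := (Finset.univ : Finset (Fin n))) (n := d)
      (by simpa using hdn)
    exact ⟨T, by simp [h𝒯, Finset.mem_powersetCard, hT, hTc]⟩
  set g : Finset (Fin n) → ℝ :=
    fun T => Real.log (Matrix.det (Matrix.of fun j k : (T : Finset (Fin n)) => x j ⬝ᵥ x k))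
    with hg
  refine ⟨𝒯.inf' h𝒯ne g, ?_⟩
  intro ν hν S hSpd
  set c : ℝ := 𝒯.inf' h𝒯ne g with hc
  set Q := S⁻¹ with hQ
  have hQpd : Q.PosDef := hSpd.inv
  -- positivity of the quadratic forms
  have hxne : ∀ i, x i ≠ 0 := by
    intro i
    have hli1 := hli {i} (by simpa using hd)
    exact hli1.ne_zero ⟨i, by simp⟩
  set q : Fin n → ℝ := fun i => x i ⬝ᵥ Q *ᵥ x i with hq
  have hqpos : ∀ i, 0 < q i := by
    intro i
    have := hQpd.dotProduct_mulVec_pos (hxne i)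
    simpa [hq] using this
  -- choose the subset T
  obtain ⟨T, hTcard, hTineq⟩ := aux_exists_subset hd hdn w (fun i => Real.log (q i))
    (fun i => (hw i).le) hw1 (fun i => (hwd i).le)
  -- the equivalence Fin d ≃ T
  have hTfin : Fintype.card T = d := by simp [hTcard]
  set e : Fin d ≃ T := (Fintype.equivFinOfCardEq hTfin).symm with he
  set X : Matrix (Fin d) (Fin d) ℝ := Matrix.of fun j k => x (e j) k with hX
  -- X is invertible
  have hXrows : LinearIndependent ℝ (fun j : Fin d => X j) := by
    have h1 := hli T hTcard.le
    exact h1.comp e e.injective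
  have hXunit : IsUnit X := Matrix.linearIndependent_rows_iff_isUnit.mp hXrows
  have hXdet : X.det ≠ 0 := by
    intro h
    exact (Matrix.isUnit_iff_isUnit_det X |>.mp hXunit).ne_zero (by simpa using h)
  have hXTH : Xᴴ = Xᵀ := by
    ext j k; simp
  -- the Gram matrix G = X Q Xᵀ
  set G : Matrix (Fin d) (Fin d) ℝ := X * Q * Xᵀ with hG
  have hGpsd : G.PosSemidef := by
    have := hQpd.posSemidef.mul_mul_conjTranspose_same X
    rwa [hXTH] at this
  have hGpd : G.PosDef := by
    refine Matrix.PosDef.of_dotProduct_mulVec_pos hGpsd.1 fun y hy => ?_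
    have hXT : IsUnit Xᵀ := (Matrix.isUnit_transpose X).mpr hXunit
    have hXy : Xᵀ *ᵥ y ≠ 0 := by
      intro h
      exact hy ((Matrix.mulVec_injective_iff_isUnit.mpr hXT).eq_iff' (by simp) |>.mp h)
    have := hQpd.dotProduct_mulVec_pos hXy
    rw [← hXTH] at *
    simpa only [star_mulVec, dotProduct_mulVec, vecMul_vecMul, hGpsd.1.eq, Matrix.conjTranspose_conjTranspose, hG] using this
  -- diagonal of G
  have hGdiag : ∀ j, G j j = q (e j) := by
    intro j
    simp only [hG, hq, Matrix.mul_apply, Matrix.transpose_apply, hX, Matrix.of_apply,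
      dotProduct, Matrix.mulVec, dotProduct]
    simp_rw [Finset.sum_mul, Finset.mul_sum]
    rw [Finset.sum_comm]
    exact Finset.sum_congr rfl fun a _ => Finset.sum_congr rfl fun b _ => by ring
  -- determinant of G
  have hdetS : (0:ℝ) < S.det := hSpd.det_pos
  have hdetQ : Q.det = S.det⁻¹ := by
    rw [hQ, Matrix.det_nonsing_inv, Ring.inverse_eq_inv]
  have hdetG : G.det = X.det ^ 2 * S.det⁻¹ := by
    rw [hG, Matrix.det_mul, Matrix.det_mul, Matrix.det_transpose, hdetQ]; ring
  have hdetGpos : 0 < G.det := hGpd.det_pos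
  have hXsqpos : 0 < X.det ^ 2 := by positivity
  -- Hadamard
  have hHad : G.det ≤ ∏ j, q (e j) := by
    calc G.det ≤ ∏ j, G j j := aux_det_le_prod_diag hGpd
      _ = ∏ j, q (e j) := Finset.prod_congr rfl fun j _ => hGdiag j
  -- sum over T of log q
  have hsumT : ∑ j ∈ T, Real.log (q j) = ∑ j : Fin d, Real.log (q (e j)) := by
    rw [← Finset.sum_coe_sort T]
    exact (Equiv.sum_comp e (fun j : T => Real.log (q j))).symm
  have hlogsum : Real.log (X.det ^ 2) - Real.log S.det ≤ ∑ j ∈ T, Real.log (q j) := by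
    rw [hsumT, ← Real.log_prod (fun j _ => (hqpos (e j)).ne')]
    have h1 : Real.log G.det ≤ Real.log (∏ j, q (e j)) :=
      Real.log_le_log hdetGpos hHad
    rw [hdetG, Real.log_mul (ne_of_gt hXsqpos) (by positivity), Real.log_inv] at h1
    linarith
  -- relate log (X.det ^ 2) to g T
  have hgT : g T = Real.log (X.det ^ 2) := by
    simp only [hg]
    congr 1
    have : (Matrix.of fun j k : (T : Finset (Fin n)) => x j ⬝ᵥ x k).det
        = ((Matrix.of fun j k : (T : Finset (Fin n)) => x j ⬝ᵥ x k).submatrix e e).det :=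
      (Matrix.det_submatrix_equiv_self e _).symm
    rw [this]
    have : (Matrix.of fun j k : (T : Finset (Fin n)) => x j ⬝ᵥ x k).submatrix e e
        = X * Xᵀ := by
      ext j k
      simp [Matrix.mul_apply, dotProduct, hX]
    rw [this, Matrix.det_mul, Matrix.det_transpose]
    ring
  have hcT : c ≤ Real.log (X.det ^ 2) := by
    rw [← hgT]
    exact Finset.inf'_le g (by simp [h𝒯, Finset.mem_powersetCard, hTcard])
  -- putting together: lower bound for the weighted log sum
  have hdpos : (0:ℝ) < (d:ℝ) := by exact_mod_cast hd
  have hstep1 : (1/d : ℝ) * (c - Real.log S.det) ≤ ∑ i, w i * Real.log (q i) := by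
    refine le_trans ?_ hTineq
    have : c - Real.log S.det ≤ ∑ j ∈ T, Real.log (q j) := by
      have := hlogsum; linarith [hcT]
    have h1d : (0:ℝ) ≤ 1/d := by positivity
    nlinarith
  have hstep2 : ∀ i, Real.log (q i) ≤ Real.log (ν + q i) := by
    intro i
    exact Real.log_le_log (hqpos i) (by linarith)
  have hstep3 : ∑ i, w i * Real.log (q i) ≤ ∑ i, w i * Real.log (ν + q i) :=
    Finset.sum_le_sum fun i _ => mul_le_mul_of_nonneg_left (hstep2 i) (hw i).le
  have hstep4 : Real.log ν ≤ ∑ i, w i * Real.log (ν + q i) := by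
    have : ∀ i, w i * Real.log ν ≤ w i * Real.log (ν + q i) := fun i =>
      mul_le_mul_of_nonneg_left (Real.log_le_log hν (by linarith [hqpos i])) (hw i).le
    calc Real.log ν = ∑ i, w i * Real.log ν := by
          rw [← Finset.sum_mul, hw1, one_mul]
      _ ≤ _ := Finset.sum_le_sum fun i _ => this i
  -- main inequality
  have hmain : c - Real.log S.det + ν * Real.log ν
      ≤ ((d:ℝ) + ν) * ∑ i, w i * Real.log (ν + q i) := by
    have h1 : (d:ℝ) * ((1/d) * (c - Real.log S.det)) ≤ (d:ℝ) * ∑ i, w i * Real.log (ν + q i) :=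
      mul_le_mul_of_nonneg_left (hstep1.trans hstep3) hdpos.le
    have h2 : ν * Real.log ν ≤ ν * ∑ i, w i * Real.log (ν + q i) :=
      mul_le_mul_of_nonneg_left hstep4 hν.le
    have h3 : (d:ℝ) * ((1/d) * (c - Real.log S.det)) = c - Real.log S.det := by
      field_simp
    nlinarith
  rw [negLogLik]
  have : x = x := rfl
  rw [hq] at hmain
  linarith [hmain]


lemma aux_gamma_tendsto (d : ℕ) (hd : 1 ≤ d) (c : ℝ) :
    Tendsto (fun t : ℝ => 2 * Real.log (Real.Gamma (t / 2))
      - 2 * Real.log (Real.Gamma ((d + t) / 2)) + c) (nhdsWithin 0 (Set.Ioi 0)) atTop := by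
  have hd2 : (0:ℝ) < (d:ℝ) / 2 := by
    have : (0:ℝ) < (d:ℝ) := by exact_mod_cast hd
    linarith
  -- second term tends to a constant
  have hcontGamma : ContinuousAt Real.Gamma ((d:ℝ) / 2) :=
    (Real.differentiableAt_Gamma (fun m => by
      have : (0:ℝ) < (d:ℝ)/2 := hd2
      intro h
      have : -(m:ℝ) ≤ 0 := neg_nonpos.mpr (Nat.cast_nonneg m)
      linarith)).continuousAt
  have h2 : Tendsto (fun t : ℝ => Real.log (Real.Gamma ((d + t) / 2)))
      (nhdsWithin 0 (Set.Ioi 0)) (nhds (Real.log (Real.Gamma ((d:ℝ) / 2)))) := by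
    apply Tendsto.mono_left _ nhdsWithin_le_nhds
    have hmap : Tendsto (fun t : ℝ => ((d:ℝ) + t) / 2) (nhds 0) (nhds ((d:ℝ)/2)) := by
      have h := (((continuous_const.add continuous_id').div_const (2:ℝ)) :
        Continuous (fun t : ℝ => ((d:ℝ) + t) / 2)).tendsto (0:ℝ)
      simpa using h
    have hg : Tendsto (fun t : ℝ => Real.Gamma ((d + t)/2)) (nhds 0)
        (nhds (Real.Gamma ((d:ℝ)/2))) := hcontGamma.tendsto.comp hmap
    exact (Real.continuousAt_log (ne_of_gt (Real.Gamma_pos_of_pos hd2))).tendsto.comp hg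
  -- first term tends to atTop
  have h1 : Tendsto (fun t : ℝ => Real.log (Real.Gamma (t / 2)))
      (nhdsWithin 0 (Set.Ioi 0)) atTop := by
    have heq : ∀ t ∈ Set.Ioi (0:ℝ), Real.log (Real.Gamma ((t+2) / 2)) - Real.log (t/2)
        = Real.log (Real.Gamma (t / 2)) := by
      intro t ht
      have ht' : (0:ℝ) < t := ht
      have h05 : t / 2 ≠ 0 := by positivity
      have : Real.Gamma (t/2 + 1) = (t/2) * Real.Gamma (t/2) := Real.Gamma_add_one h05
      have harg : (t + 2)/2 = t/2 + 1 := by ring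
      rw [harg, this, Real.log_mul (by positivity) (ne_of_gt (Real.Gamma_pos_of_pos (by positivity)))]
      ring
    have hA : Tendsto (fun t : ℝ => Real.log (Real.Gamma ((t+2) / 2)))
        (nhdsWithin 0 (Set.Ioi 0)) (nhds (Real.log (Real.Gamma 1))) := by
      apply Tendsto.mono_left _ nhdsWithin_le_nhds
      have hmap : Tendsto (fun t : ℝ => (t + 2) / 2) (nhds 0) (nhds 1) := by
        have h := (((continuous_id'.add continuous_const).div_const (2:ℝ)) :
          Continuous (fun t : ℝ => (t + 2) / 2)).tendsto (0:ℝ)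
        simpa using h
      have hcont1 : ContinuousAt Real.Gamma 1 :=
        (Real.differentiableAt_Gamma (fun m => by
          intro h
          have : -(m:ℝ) ≤ 0 := neg_nonpos.mpr (Nat.cast_nonneg m)
          linarith)).continuousAt
      exact ((Real.continuousAt_log (by
        rw [Real.Gamma_one]; norm_num)).tendsto.comp hcont1.tendsto).comp hmap
    have hB : Tendsto (fun t : ℝ => -Real.log (t / 2)) (nhdsWithin 0 (Set.Ioi 0)) atTop := by
      have hmap : Tendsto (fun t : ℝ => t / 2) (nhdsWithin 0 (Set.Ioi 0))
          (nhdsWithin 0 (Set.Ioi 0)) := by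
        apply tendsto_nhdsWithin_of_tendsto_nhds_of_eventually_within
        · have := (continuous_id.div_const (2:ℝ)).tendsto (0:ℝ)
          simpa using this.mono_left nhdsWithin_le_nhds
        · filter_upwards [self_mem_nhdsWithin] with t ht
          have : (0:ℝ) < t := ht
          simpa using by positivity
      have := Real.tendsto_log_nhdsGT_zero.comp hmap
      exact tendsto_neg_atBot_atTop.comp this
    have hsum : Tendsto (fun t : ℝ => -Real.log (t/2) + Real.log (Real.Gamma ((t+2) / 2)))
        (nhdsWithin 0 (Set.Ioi 0)) atTop := hB.atTop_add hA
    apply Tendsto.congr' _ hsum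
    filter_upwards [self_mem_nhdsWithin] with t ht
    have := heq t ht
    linarith
  have : Tendsto (fun t : ℝ => 2 * Real.log (Real.Gamma (t / 2)))
      (nhdsWithin 0 (Set.Ioi 0)) atTop := by
    exact (tendsto_const_mul_atTop_of_pos (by norm_num : (0:ℝ) < 2)).mpr h1
  have hrest : Tendsto (fun t : ℝ => -(2 * Real.log (Real.Gamma ((d + t) / 2))) + c)
      (nhdsWithin 0 (Set.Ioi 0)) (nhds (-(2 * Real.log (Real.Gamma ((d:ℝ)/2))) + c)) := by
    exact (((h2.const_mul 2).neg).add_const c)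
  have := this.atTop_add hrest
  apply this.congr
  intro t
  ring

/-- under the standing assumption (any `≤ d` samples are linearly independent
and `max wᵢ < 1/d`), if `(ν_r, Σ_r)_r` is a sequence in `(0,∞) × SPD(d)` such that `(ν_r)`
has a subsequence converging to `0`, then `(ν_r, Σ_r)_r` is not a minimizing sequence of `L`,
i.e. `L(ν_r, Σ_r)` does not converge to the infimum of `L` over `(0,∞) × SPD(d)`. -/
theorem not_minimizing_of_nu_subseq_to_zero (d n : ℕ) (hd : 1 ≤ d)
    (x : Fin n → Fin d → ℝ) (w : Fin n → ℝ)
    (hw : ∀ i, 0 < w i) (hw1 : ∑ i, w i = 1)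
    (hli : ∀ I : Finset (Fin n), I.card ≤ d →
      LinearIndependent ℝ (fun i : I => x i))
    (hwd : ∀ i, w i < 1 / d)
    (ν : ℕ → ℝ) (S : ℕ → Matrix (Fin d) (Fin d) ℝ)
    (hν : ∀ r, 0 < ν r) (hS : ∀ r, (S r).PosDef)
    (hsub : ∃ k : ℕ → ℕ, StrictMono k ∧ Tendsto (fun j => ν (k j)) atTop (nhds 0)) :
    ¬ Tendsto (fun r => negLogLik d n x w (ν r) (S r)) atTop
        (nhds (sInf {y : ℝ | ∃ a, 0 < a ∧ ∃ M : Matrix (Fin d) (Fin d) ℝ,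
          M.PosDef ∧ y = negLogLik d n x w a M})) := by
  intro htend
  obtain ⟨k, hk, hk0⟩ := hsub
  -- d ≤ n
  have hnpos : 0 < n := by
    by_contra hn
    push_neg at hn
    interval_cases n
    simp at hw1
  have hdn : d ≤ n := by
    have hdR : (0:ℝ) < (d:ℝ) := by exact_mod_cast hd
    have hlt : (1:ℝ) < ∑ _i : Fin n, (1/d : ℝ) := by
      calc (1:ℝ) = ∑ i, w i := hw1.symm
        _ < ∑ _i : Fin n, (1/d:ℝ) := Finset.sum_lt_sum_of_nonempty
            (Finset.univ_nonempty_iff.mpr ⟨⟨0, hnpos⟩⟩) (fun i _ => hwd i)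
    rw [Finset.sum_const, Finset.card_univ, Fintype.card_fin, nsmul_eq_mul] at hlt
    by_contra hcon
    push_neg at hcon
    have h2 : (n:ℝ) < (d:ℝ) := by exact_mod_cast hcon
    have h3 : (n:ℝ) * (1/d) < 1 := by
      rw [mul_one_div, div_lt_one hdR]; exact h2
    linarith
  -- uniform lower bound
  obtain ⟨c, hc⟩ := aux_lower_bound d n hd hdn x w hw hw1 hli hwd
  -- the subsequence of ν tends to 0 within Ioi 0
  have hk0' : Tendsto (fun j => ν (k j)) atTop (nhdsWithin 0 (Set.Ioi 0)) := by
    apply tendsto_nhdsWithin_of_tendsto_nhds_of_eventually_within _ hk0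
    exact Eventually.of_forall fun j => hν (k j)
  -- the lower-bounding function tends to atTop along the subsequence
  have hBtop : Tendsto (fun j => 2 * Real.log (Real.Gamma (ν (k j) / 2))
      - 2 * Real.log (Real.Gamma ((d + ν (k j)) / 2)) + c) atTop atTop :=
    (aux_gamma_tendsto d hd c).comp hk0'
  -- hence the negative log-likelihood tends to atTop along the subsequence
  have hLtop : Tendsto (fun j => negLogLik d n x w (ν (k j)) (S (k j))) atTop atTop := by
    apply tendsto_atTop_mono _ hBtop
    intro j
    exact hc (ν (k j)) (hν (k j)) (S (k j)) (hS (k j))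
  -- but the subsequence of a convergent sequence converges
  have hLconv : Tendsto (fun j => negLogLik d n x w (ν (k j)) (S (k j))) atTop
      (nhds (sInf {y : ℝ | ∃ a, 0 < a ∧ ∃ M : Matrix (Fin d) (Fin d) ℝ,
          M.PosDef ∧ y = negLogLik d n x w a M})) :=
    htend.comp hk.tendsto_atTop
  exact not_tendsto_nhds_of_tendsto_atTop hLtop _ hLconv
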